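/- arXiv:1910.12629 — 7 statements merged into one kernel-verified Lean document; each statement's English description precedes it below -/
import Mathlib

section
/- On the edge x = 0, y + z = 1, the equation P_P = P_D has the unique solution z = α where α = (rc/N - c - G + pq(N-1)b) / ((B + b - h)(N-1)pq - B(N-1)), provided the denominator is nonzero. Hence (0, 1-α, α) is an equilibrium of the replicator dynamics whenever 0 < α < 1. -/
/-- Payoff of a cooperator. -/
noncomputable def PCf (N r c x z : ℝ) : ℝ := r*c/N*(N-1)*(x+z) + r*c/N - c

/-- Payoff of a defector. -/
noncomputable def PDf (N r c B h p q x z : ℝ) : ℝ :=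
  r*c/N*(N-1)*(x+z) - (1-p*q)*B*(N-1)*z - p*q*(N-1)*z*h

/-- Payoff of a pool punisher. -/
noncomputable def PPf (N r c G b p q x y z : ℝ) : ℝ :=
  r*c/N*(N-1)*(x+z) + r*c/N - c - G + p*q*(N-1)*y*b

/-- on the edge x = 0, y + z = 1, the equation P_P = P_D has the unique
solution z = α (given a nonzero denominator); hence (0, 1-α, α) is an equilibrium of the
replicator dynamics whenever 0 < α < 1. -/
theorem stmt2 (N r c G B b h p q α : ℝ)
    (hr : 1 < r) (hrN : r < N) (hc : 0 < c) (hG : 0 < G) (hB : 0 < B) (hb : 0 < b)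
    (hh : 0 ≤ h) (hp0 : 0 < p) (hp1 : p ≤ 1) (hq0 : 0 < q) (hq1 : q ≤ 1)
    (hden : (B + b - h)*(N-1)*p*q - B*(N-1) ≠ 0)
    (hα : α = (r*c/N - c - G + p*q*(N-1)*b) / ((B + b - h)*(N-1)*p*q - B*(N-1))) :
    (∀ z : ℝ, PPf N r c G b p q 0 (1-z) z = PDf N r c B h p q 0 z ↔ z = α) ∧
    (0 < α → α < 1 →
      0 * (PCf N r c 0 α
          - (0 * PCf N r c 0 α + (1-α) * PDf N r c B h p q 0 α
              + α * PPf N r c G b p q 0 (1-α) α)) = 0 ∧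
      (1-α) * (PDf N r c B h p q 0 α
          - (0 * PCf N r c 0 α + (1-α) * PDf N r c B h p q 0 α
              + α * PPf N r c G b p q 0 (1-α) α)) = 0 ∧
      α * (PPf N r c G b p q 0 (1-α) α
          - (0 * PCf N r c 0 α + (1-α) * PDf N r c B h p q 0 α
              + α * PPf N r c G b p q 0 (1-α) α)) = 0) := by

  have hN : (N:ℝ) ≠ 0 := by intro h; rw [h] at hrN; linarith
  have key : ∀ z : ℝ, PPf N r c G b p q 0 (1-z) z = PDf N r c B h p q 0 z ↔ z = α := by
    intro z
    rw [hα, eq_div_iff hden]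
    unfold PPf PDf
    constructor
    · intro h1
      field_simp at h1 ⊢
      ring_nf at h1 ⊢
      linarith
    · intro h1
      field_simp at h1 ⊢
      ring_nf at h1 ⊢
      linarith
  refine ⟨key, fun _ _ => ?_⟩
  have hpd : PPf N r c G b p q 0 (1-α) α = PDf N r c B h p q 0 α := (key α).mpr rfl
  refine ⟨by ring, ?_, ?_⟩ <;> rw [hpd] <;> ring
end

section
/- Define β = (c - rc/N)/((1-pq)B(N-1) + pq·h(N-1)) and μ = G/(pq(N-1)b), assuming the denominators are positive. If β < 1, μ < 1, and β + μ < 1, then the point (x, y, z) = (1-β-μ, μ, β) satisfies P_C = P_D = P_P, and hence is an interior equilibrium of the replicator dynamics. -/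
/-- with β = (c - rc/N)/((1-pq)B(N-1) + pq h(N-1)) and μ = G/(pq(N-1)b)
(positive denominators), if β < 1, μ < 1 and β + μ < 1, then (x,y,z) = (1-β-μ, μ, β)
satisfies P_C = P_D = P_P, hence is an interior equilibrium of the replicator dynamics. -/
theorem stmt3 (N r c G B b h p q β μ : ℝ)
    (hr : 1 < r) (hrN : r < N) (hc : 0 < c) (hG : 0 < G) (hB : 0 < B) (hb : 0 < b)
    (hh : 0 ≤ h) (hp0 : 0 < p) (hp1 : p ≤ 1) (hq0 : 0 < q) (hq1 : q ≤ 1)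
    (hden1 : 0 < (1-p*q)*B*(N-1) + p*q*h*(N-1))
    (hden2 : 0 < p*q*(N-1)*b)
    (hβ : β = (c - r*c/N) / ((1-p*q)*B*(N-1) + p*q*h*(N-1)))
    (hμ : μ = G / (p*q*(N-1)*b))
    (hβ1 : β < 1) (hμ1 : μ < 1) (hβμ : β + μ < 1) :
    PCf N r c (1-β-μ) β = PDf N r c B h p q (1-β-μ) β ∧
    PDf N r c B h p q (1-β-μ) β = PPf N r c G b p q (1-β-μ) μ β := by
  have hβe : β * ((1-p*q)*B*(N-1) + p*q*h*(N-1)) = c - r*c/N := by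
    rw [hβ, div_mul_cancel₀ _ hden1.ne']
  have hμe : μ * (p*q*(N-1)*b) = G := by
    rw [hμ, div_mul_cancel₀ _ hden2.ne']
  constructor
  · unfold PCf PDf; nlinarith [hβe]
  · unfold PDf PPf; nlinarith [hβe, hμe]
end

section
/- The Jacobian of the reduced planar replicator system at the vertex (x,y) = (1,0) (all-cooperator state) is upper triangular with eigenvalues -G and c - rc/N. Since r < N implies c - rc/N > 0, the all-cooperator state is a saddle point and therefore unstable. -/
/-- Right-hand side of ẋ in the reduced planar replicator system (z = 1-x-y). -/
noncomputable def fRHS (N r c G B b h p q : ℝ) (x y : ℝ) : ℝ :=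
  let z := 1 - x - y
  let PC := r*c/N*(N-1)*(x+z) + r*c/N - c
  let PD := r*c/N*(N-1)*(x+z) - (1-p*q)*B*(N-1)*z - p*q*(N-1)*z*h
  let PP := r*c/N*(N-1)*(x+z) + r*c/N - c - G + p*q*(N-1)*y*b
  x*((1-x)*(PC-PP) - y*(PD-PP))

/-- Right-hand side of ẏ in the reduced planar replicator system (z = 1-x-y). -/
noncomputable def gRHS (N r c G B b h p q : ℝ) (x y : ℝ) : ℝ :=
  let z := 1 - x - y
  let PC := r*c/N*(N-1)*(x+z) + r*c/N - c
  let PD := r*c/N*(N-1)*(x+z) - (1-p*q)*B*(N-1)*z - p*q*(N-1)*z*h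
  let PP := r*c/N*(N-1)*(x+z) + r*c/N - c - G + p*q*(N-1)*y*b
  y*((1-y)*(PD-PP) - x*(PC-PP))

/-- The reduced planar replicator vector field. -/
noncomputable def Fsys (N r c G B b h p q : ℝ) : ℝ × ℝ → ℝ × ℝ :=
  fun u => (fRHS N r c G B b h p q u.1 u.2, gRHS N r c G B b h p q u.1 u.2)

/-- Lyapunov stability of an equilibrium of a planar vector field. -/
def IsStableEq (F : ℝ × ℝ → ℝ × ℝ) (s : ℝ × ℝ) : Prop :=
  ∀ ε > 0, ∃ δ > 0, ∀ u : ℝ → ℝ × ℝ,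
    (∀ t, HasDerivAt u (F (u t)) t) → ‖u 0 - s‖ < δ → ∀ t ≥ 0, ‖u t - s‖ < ε

/-- Asymptotic stability of an equilibrium of a planar vector field. -/
def IsAsympStableEq (F : ℝ × ℝ → ℝ × ℝ) (s : ℝ × ℝ) : Prop :=
  IsStableEq F s ∧ ∃ δ > 0, ∀ u : ℝ → ℝ × ℝ,
    (∀ t, HasDerivAt u (F (u t)) t) → ‖u 0 - s‖ < δ →
      Filter.Tendsto u Filter.atTop (nhds s)

/-- (1,1)-entry of the Jacobian of the reduced system. -/
noncomputable def Jxx (N r c G B b h p q x0 y0 : ℝ) : ℝ :=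
  deriv (fun s => fRHS N r c G B b h p q s y0) x0

/-- (1,2)-entry of the Jacobian of the reduced system. -/
noncomputable def Jxy (N r c G B b h p q x0 y0 : ℝ) : ℝ :=
  deriv (fun s => fRHS N r c G B b h p q x0 s) y0

/-- (2,1)-entry of the Jacobian of the reduced system. -/
noncomputable def Jyx (N r c G B b h p q x0 y0 : ℝ) : ℝ :=
  deriv (fun s => gRHS N r c G B b h p q s y0) x0

/-- (2,2)-entry of the Jacobian of the reduced system. -/
noncomputable def Jyy (N r c G B b h p q x0 y0 : ℝ) : ℝ :=
  deriv (fun s => gRHS N r c G B b h p q x0 s) y0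

section AuxLemmas
variable (N r c G B b h p q : ℝ)

lemma fline (yv : ℝ) :
    fRHS N r c G B b h p q (1-yv) yv = -((c - r*c/N)*yv*(1-yv)) := by
  simp only [fRHS]; ring

lemma gline (yv : ℝ) :
    gRHS N r c G B b h p q (1-yv) yv = (c - r*c/N)*yv*(1-yv) := by
  simp only [gRHS]; ring

lemma fx0 : (fun s => fRHS N r c G B b h p q s 0) = fun s => G*s - G*s^2 := by
  funext s; simp only [fRHS]; ring

lemma gx0 : (fun s => gRHS N r c G B b h p q s 0) = fun _ => (0:ℝ) := by
  funext s; simp only [gRHS]; ring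

lemma gy0 : (fun s => gRHS N r c G B b h p q 1 s) =
      fun s => (c - r*c/N)*s + ((1-p*q)*B*(N-1) + p*q*(N-1)*h - (c - r*c/N) - G)*s^2
        - ((1-p*q)*B*(N-1) + p*q*(N-1)*h - p*q*(N-1)*b)*s^3 := by
  funext s; simp only [gRHS]; ring

end AuxLemmas

/-- the Jacobian of the reduced planar replicator system at (1,0)
(all-cooperator state) is upper triangular with eigenvalues -G and c - rc/N; since
r < N implies c - rc/N > 0, the all-cooperator state is a saddle point and unstable. -/
theorem stmt6 (N r c G B b h p q : ℝ)
    (hr : 1 < r) (hrN : r < N) (hc : 0 < c) (hG : 0 < G) (hB : 0 < B) (hb : 0 < b)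
    (hh : 0 ≤ h) (hp0 : 0 ≤ p) (hp1 : p ≤ 1) (hq0 : 0 ≤ q) (hq1 : q ≤ 1) :
    Jyx N r c G B b h p q 1 0 = 0 ∧
    Jxx N r c G B b h p q 1 0 = -G ∧
    Jyy N r c G B b h p q 1 0 = c - r*c/N ∧
    0 < c - r*c/N ∧
    ¬ IsStableEq (Fsys N r c G B b h p q) (1, 0) := by

  have hN : (0:ℝ) < N := lt_trans (lt_trans one_pos hr) hrN
  have hkpos : 0 < c - r*c/N := by
    have hlt : r*c/N < c := by
      rw [div_lt_iff₀ hN]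
      nlinarith
    linarith
  set k := c - r*c/N with hk
  refine ⟨?_, ?_, ?_, hkpos, ?_⟩
  · unfold Jyx
    rw [gx0]
    exact deriv_const 1 0
  · unfold Jxx
    rw [fx0]
    have hd : HasDerivAt (fun s : ℝ => G*s - G*s^2) (-G) 1 := by
      have h1 : HasDerivAt (fun s : ℝ => G*s) G 1 := by
        simpa using (hasDerivAt_id (1:ℝ)).const_mul G
      have h2 : HasDerivAt (fun s : ℝ => G*s^2) (G*2) 1 := by
        simpa using (hasDerivAt_pow 2 (1:ℝ)).const_mul G
      have := h1.fun_sub h2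
      rw [show (-G) = G - G*2 by ring]; exact this
    exact hd.deriv
  · unfold Jyy
    rw [gy0]
    set A := (1-p*q)*B*(N-1) + p*q*(N-1)*h - (c - r*c/N) - G with hA
    set C := (1-p*q)*B*(N-1) + p*q*(N-1)*h - p*q*(N-1)*b with hC
    have hd : HasDerivAt (fun s : ℝ => k*s + A*s^2 - C*s^3) k 0 := by
      have h1 : HasDerivAt (fun s : ℝ => k*s) k 0 := by
        simpa using (hasDerivAt_id (0:ℝ)).const_mul k
      have h2 : HasDerivAt (fun s : ℝ => A*s^2) 0 0 := by
        have := (hasDerivAt_pow 2 (0:ℝ)).const_mul A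
        simpa using this
      have h3 : HasDerivAt (fun s : ℝ => C*s^3) 0 0 := by
        have := (hasDerivAt_pow 3 (0:ℝ)).const_mul C
        simpa using this
      have := (h1.fun_add h2).fun_sub h3
      simpa using this
    exact hd.deriv
  · intro hs
    obtain ⟨δ, hδ, hδprop⟩ := hs (1/4) (by norm_num)
    set y0 := min (δ/2) (1/2) with hy0def
    have hy0pos : 0 < y0 := lt_min (by linarith) (by norm_num)
    have hy0le : y0 ≤ 1/2 := min_le_right _ _
    set w : ℝ → ℝ := fun t => y0 + (1-y0)*Real.exp (-(k*t)) with hwdef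
    have hwpos : ∀ t, 0 < w t := by
      intro t
      have : (0:ℝ) ≤ (1-y0)*Real.exp (-(k*t)) :=
        mul_nonneg (by linarith) (Real.exp_pos _).le
      simp only [hwdef]; linarith
    set y : ℝ → ℝ := fun t => y0 / w t with hydef
    have hwderiv : ∀ t, HasDerivAt w ((1-y0)*(Real.exp (-(k*t)) * (-k))) t := by
      intro t
      have h1 : HasDerivAt (fun t : ℝ => -(k*t)) (-k) t := by
        simpa using ((hasDerivAt_id t).const_mul k).fun_neg
      have h2 := h1.exp
      have := (h2.const_mul (1-y0)).const_add y0
      simpa [hwdef, mul_comm] using this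
    have hyderiv : ∀ t, HasDerivAt y (k * y t * (1 - y t)) t := by
      intro t
      have hw := hwderiv t
      have hwne : w t ≠ 0 := (hwpos t).ne'
      have hd := (hasDerivAt_const t y0).div hw hwne
      have heq : (0 * w t - y0 * ((1-y0)*(Real.exp (-(k*t)) * (-k)))) / (w t)^2
          = k * y t * (1 - y t) := by
        have hy1 : 1 - y t = ((1-y0)*Real.exp (-(k*t))) / w t := by
          rw [hydef]; field_simp; simp only [hwdef]; ring
        rw [hy1]
        simp only [hydef]
        field_simp
        ring
      rw [heq] at hd
      exact hd
    set u : ℝ → ℝ × ℝ := fun t => (1 - y t, y t) with hudef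
    have huderiv : ∀ t, HasDerivAt u (Fsys N r c G B b h p q (u t)) t := by
      intro t
      have h1 : HasDerivAt (fun t => 1 - y t) (-(k * y t * (1 - y t))) t := by
        simpa using (hasDerivAt_const t 1).fun_sub (hyderiv t)
      have h2 := h1.prodMk (hyderiv t)
      have : Fsys N r c G B b h p q (u t)
          = (-(k * y t * (1 - y t)), k * y t * (1 - y t)) := by
        simp only [Fsys, hudef]
        rw [fline, gline, hk]
      rw [this]
      exact h2
    have hw0 : w 0 = 1 := by
      simp only [hwdef]
      norm_num
    have hy00 : y 0 = y0 := by
      simp [hydef, hw0]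
    have hu0 : ‖u 0 - (1,0)‖ < δ := by
      have huval : u 0 - (1,0) = (-y0, y0) := by
        rw [Prod.ext_iff]
        constructor
        · show (1 - y 0) - 1 = -y0
          rw [hy00]; ring
        · show y 0 - 0 = y0
          rw [hy00]; ring
      rw [huval, Prod.norm_def]
      simp only [norm_neg, max_self, Real.norm_eq_abs, abs_of_pos hy0pos]
      calc y0 ≤ δ/2 := min_le_left _ _
        _ < δ := by linarith
    have hwlim : Filter.Tendsto w Filter.atTop (nhds y0) := by
      have hkt : Filter.Tendsto (fun t : ℝ => -(k*t)) Filter.atTop Filter.atBot := by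
        have hmul := Filter.Tendsto.const_mul_atTop hkpos (Filter.tendsto_id (α := ℝ))
        exact Filter.tendsto_neg_atBot_iff.mpr hmul
      have he : Filter.Tendsto (fun t : ℝ => Real.exp (-(k*t))) Filter.atTop (nhds 0) :=
        Real.tendsto_exp_atBot.comp hkt
      have := (he.const_mul (1-y0)).const_add y0
      simpa [hwdef] using this
    have hylim : Filter.Tendsto y Filter.atTop (nhds 1) := by
      have := (tendsto_const_nhds (x := y0) (f := Filter.atTop (α := ℝ))).div hwlim hy0pos.ne'
      rw [div_self hy0pos.ne'] at this; exact this
    have hev : ∀ᶠ t in Filter.atTop, y t > 1/2 :=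
      hylim.eventually (eventually_gt_nhds (by norm_num))
    obtain ⟨t, hty, ht0⟩ := (hev.and (Filter.eventually_ge_atTop (0:ℝ))).exists
    have hcontra := hδprop u huderiv hu0 t ht0
    have hnorm : ‖u t - (1,0)‖ = |y t| := by
      have huval : u t - (1,0) = (-(y t), y t) := by
        rw [Prod.ext_iff]
        constructor
        · show (1 - y t) - 1 = -(y t)
          ring
        · show y t - 0 = y t
          ring
      rw [huval, Prod.norm_def]
      simp [Real.norm_eq_abs]
    rw [hnorm, abs_of_pos (by linarith : 0 < y t)] at hcontra
    linarith
end

section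
/- With ε = x/(x+y) and z as coordinates, the replicator dynamics transform to ε̇ = ε(1-ε)[rc/N - c + (1-pq)B(N-1)z + (N-1)pqzh] and ż = z(1-z){(1-ε)[rc/N - c + pq(N-1)(1-z)b + (1-pq)B(N-1)z + pq(N-1)zh] - G}, wherever x + y > 0. -/
/-- Average payoff of the population. -/
noncomputable def PbarF (N r c G B b h p q x y z : ℝ) : ℝ :=
  x * PCf N r c x z + y * PDf N r c B h p q x z + z * PPf N r c G b p q x y z

/-- with ε = x/(x+y) and z as coordinates, the replicator dynamics
transform to ε̇ = ε(1-ε)[rc/N - c + (1-pq)B(N-1)z + (N-1)pq z h] and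
ż = z(1-z){(1-ε)[rc/N - c + pq(N-1)(1-z)b + (1-pq)B(N-1)z + pq(N-1)z h] - G},
wherever x + y > 0. -/
theorem stmt10 (N r c G B b h p q : ℝ)
    (hr : 1 < r) (hrN : r < N) (hc : 0 < c) (hG : 0 < G) (hB : 0 < B) (hb : 0 < b)
    (hh : 0 ≤ h) (hp0 : 0 < p) (hp1 : p ≤ 1) (hq0 : 0 < q) (hq1 : q ≤ 1)
    (x y z : ℝ → ℝ)
    (hx : Differentiable ℝ x) (hy : Differentiable ℝ y) (hz : Differentiable ℝ z)
    (hsum : ∀ t, x t + y t + z t = 1)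
    (hrepx : ∀ t, deriv x t
      = x t * (PCf N r c (x t) (z t) - PbarF N r c G B b h p q (x t) (y t) (z t)))
    (hrepy : ∀ t, deriv y t
      = y t * (PDf N r c B h p q (x t) (z t) - PbarF N r c G B b h p q (x t) (y t) (z t)))
    (hrepz : ∀ t, deriv z t
      = z t * (PPf N r c G b p q (x t) (y t) (z t)
          - PbarF N r c G B b h p q (x t) (y t) (z t)))
    (t : ℝ) (hpos : 0 < x t + y t) :
    deriv (fun s => x s / (x s + y s)) t
      = (x t / (x t + y t)) * (1 - x t / (x t + y t))
          * (r*c/N - c + (1-p*q)*B*(N-1)*(z t) + (N-1)*p*q*(z t)*h) ∧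
    deriv z t
      = z t * (1 - z t)
          * ((1 - x t / (x t + y t))
              * (r*c/N - c + p*q*(N-1)*(1 - z t)*b + (1-p*q)*B*(N-1)*(z t)
                  + p*q*(N-1)*(z t)*h) - G) := by
  have hS : x t + y t ≠ 0 := hpos.ne'
  constructor
  · have hdiv : deriv (fun s => x s / (x s + y s)) t
        = (deriv x t * (x t + y t) - x t * deriv (fun s => x s + y s) t)
            / (x t + y t) ^ 2 :=
      deriv_div (hx t) ((hx t).add (hy t)) hS
    rw [hdiv, deriv_fun_add (hx t) (hy t), hrepx t, hrepy t]
    simp only [PCf, PDf, PPf, PbarF]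
    field_simp
    ring
  · rw [hrepz t]
    have hzv : z t = 1 - x t - y t := by linarith [hsum t]
    rw [hzv]
    simp only [PCf, PDf, PPf, PbarF]
    field_simp
    ring
end

section
/- If (1-pq)B + pqh - pqb = 0, then at any interior equilibrium of the reduced planar replicator system, the trace of the Jacobian is zero while the determinant is strictly positive; hence the eigenvalues are purely imaginary and the equilibrium is a linear center. -/
lemma deriv_cubic (a3 a2 a1 a0 x : ℝ) :
    deriv (fun s => a3*s^3 + a2*s^2 + a1*s + a0) x = 3*a3*x^2 + 2*a2*x + a1 := by
  have h3 : HasDerivAt (fun s : ℝ => s^3) (3*x^2) x := by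
    simpa using hasDerivAt_pow 3 x
  have h2 : HasDerivAt (fun s : ℝ => s^2) (2*x) x := by
    simpa using hasDerivAt_pow 2 x
  have h1 : HasDerivAt (fun s : ℝ => s) 1 x := hasDerivAt_id x
  have h : HasDerivAt (fun s : ℝ => a3*s^3 + a2*s^2 + a1*s + a0)
      (3*a3*x^2 + 2*a2*x + a1) x := by
    have hcomb := ((h3.const_mul a3).add (h2.const_mul a2)).add ((h1.const_mul a1).add_const a0)
    rw [show (fun s : ℝ => a3*s^3 + a2*s^2 + a1*s + a0)
          = (fun x : ℝ => a3*x^3 + a2*x^2 + (a1*x + a0)) from funext fun s => by ring,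
        show 3*a3*x^2 + 2*a2*x + a1 = a3*(3*x^2) + a2*(2*x) + a1*1 from by ring]
    exact hcomb
  exact h.deriv

/-- if (1-pq)B + pqh - pqb = 0, then at any interior equilibrium of the
reduced planar replicator system the trace of the Jacobian is zero while the determinant
is strictly positive; hence the eigenvalues are purely imaginary (linear center). -/
theorem stmt11 (N r c G B b h p q xs ys : ℝ)
    (hr : 1 < r) (hrN : r < N) (hc : 0 < c) (hG : 0 < G) (hB : 0 < B) (hb : 0 < b)
    (hh : 0 ≤ h) (hp0 : 0 < p) (hp1 : p ≤ 1) (hq0 : 0 < q) (hq1 : q ≤ 1)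
    (hdeg : (1-p*q)*B + p*q*h - p*q*b = 0)
    (hxs : 0 < xs) (hys : 0 < ys) (hsum : xs + ys < 1)
    (heq1 : fRHS N r c G B b h p q xs ys = 0)
    (heq2 : gRHS N r c G B b h p q xs ys = 0) :
    Jxx N r c G B b h p q xs ys + Jyy N r c G B b h p q xs ys = 0 ∧
    0 < Jxx N r c G B b h p q xs ys * Jyy N r c G B b h p q xs ys
        - Jxy N r c G B b h p q xs ys * Jyx N r c G B b h p q xs ys ∧
    (∀ μ : ℂ,
      μ^2 - ((Jxx N r c G B b h p q xs ys + Jyy N r c G B b h p q xs ys : ℝ) : ℂ) * μ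
        + ((Jxx N r c G B b h p q xs ys * Jyy N r c G B b h p q xs ys
            - Jxy N r c G B b h p q xs ys * Jyx N r c G B b h p q xs ys : ℝ) : ℂ) = 0 →
      μ.re = 0) := by
  have hN1 : (1:ℝ) < N := hr.trans hrN
  have hz : (0:ℝ) < 1 - xs - ys := by linarith
  -- equilibrium relations
  have e1' : xs*((1-xs)*(G - p*q*(N-1)*ys*b) - ys*((-(((1-p*q)*B + p*q*h)*(N-1))*(1-ys) + c - r*c/N + (G - p*q*(N-1)*ys*b)) + (((1-p*q)*B + p*q*h)*(N-1))*xs)) = 0 := by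
    have h := heq1; simp only [fRHS] at h; linear_combination h
  have e2' : ys*((1-ys)*((-(((1-p*q)*B + p*q*h)*(N-1))*(1-ys) + c - r*c/N + (G - p*q*(N-1)*ys*b)) + (((1-p*q)*B + p*q*h)*(N-1))*xs) - xs*(G - p*q*(N-1)*ys*b)) = 0 := by
    have h := heq2; simp only [gRHS] at h; linear_combination h
  have e1 : (1-xs)*(G - p*q*(N-1)*ys*b) - ys*((-(((1-p*q)*B + p*q*h)*(N-1))*(1-ys) + c - r*c/N + (G - p*q*(N-1)*ys*b)) + (((1-p*q)*B + p*q*h)*(N-1))*xs) = 0 :=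
    (mul_eq_zero.mp e1').resolve_left (ne_of_gt hxs)
  have e2 : (1-ys)*((-(((1-p*q)*B + p*q*h)*(N-1))*(1-ys) + c - r*c/N + (G - p*q*(N-1)*ys*b)) + (((1-p*q)*B + p*q*h)*(N-1))*xs) - xs*(G - p*q*(N-1)*ys*b) = 0 :=
    (mul_eq_zero.mp e2').resolve_left (ne_of_gt hys)
  have hA' : (G - p*q*(N-1)*ys*b) * (1-xs-ys) = 0 := by linear_combination (1-ys)*e1 + ys*e2
  have hD' : ((-(((1-p*q)*B + p*q*h)*(N-1))*(1-ys) + c - r*c/N + (G - p*q*(N-1)*ys*b)) + (((1-p*q)*B + p*q*h)*(N-1))*xs) * (1-xs-ys) = 0 := by linear_combination xs*e1 + (1-xs)*e2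
  have hA : (G - p*q*(N-1)*ys*b) = 0 := (mul_eq_zero.mp hA').resolve_right (ne_of_gt hz)
  have hD : ((-(((1-p*q)*B + p*q*h)*(N-1))*(1-ys) + c - r*c/N + (G - p*q*(N-1)*ys*b)) + (((1-p*q)*B + p*q*h)*(N-1))*xs) = 0 := (mul_eq_zero.mp hD').resolve_right (ne_of_gt hz)
  -- Jacobian entries
  have hfx : (fun s => fRHS N r c G B b h p q s ys) = (fun s =>
      (0:ℝ)*s^3 + (-((G - p*q*(N-1)*ys*b) + ys*(((1-p*q)*B + p*q*h)*(N-1))))*s^2 + ((G - p*q*(N-1)*ys*b) - ys*(-(((1-p*q)*B + p*q*h)*(N-1))*(1-ys) + c - r*c/N + (G - p*q*(N-1)*ys*b)))*s + 0) :=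
    funext fun s => by simp only [fRHS]; ring
  have hfy : (fun t => fRHS N r c G B b h p q xs t) = (fun t =>
      (0:ℝ)*t^3 + (-(xs*((((1-p*q)*B + p*q*h)*(N-1)) - p*q*(N-1)*b)))*t^2 + (-(xs*((1-xs)*(p*q*(N-1)*b) + (-(((1-p*q)*B + p*q*h)*(N-1))*(1-xs) + c - r*c/N + G))))*t
      + xs*(1-xs)*G) :=
    funext fun t => by simp only [fRHS]; ring
  have hgx : (fun s => gRHS N r c G B b h p q s ys) = (fun s =>
      (0:ℝ)*s^3 + (0:ℝ)*s^2 + (ys*((1-ys)*(((1-p*q)*B + p*q*h)*(N-1)) - (G - p*q*(N-1)*ys*b)))*s + ys*(1-ys)*(-(((1-p*q)*B + p*q*h)*(N-1))*(1-ys) + c - r*c/N + (G - p*q*(N-1)*ys*b))) :=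
    funext fun s => by simp only [gRHS]; ring
  have hgy : (fun t => gRHS N r c G B b h p q xs t) = (fun t =>
      (-((((1-p*q)*B + p*q*h)*(N-1)) - p*q*(N-1)*b))*t^3 + (((((1-p*q)*B + p*q*h)*(N-1)) - p*q*(N-1)*b) - (-(((1-p*q)*B + p*q*h)*(N-1))*(1-xs) + c - r*c/N + G) + xs*(p*q*(N-1)*b))*t^2 + ((-(((1-p*q)*B + p*q*h)*(N-1))*(1-xs) + c - r*c/N + G) - xs*G)*t + 0) :=
    funext fun t => by simp only [gRHS]; ring
  have hJxx : Jxx N r c G B b h p q xs ys = -(xs*ys*((N-1)*p*q*b)) := by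
    rw [Jxx, hfx, deriv_cubic]
    linear_combination (1-2*xs)*hA - ys*hD - xs*ys*(N-1)*hdeg
  have hJxy : Jxy N r c G B b h p q xs ys = -(xs*(1-xs)*((N-1)*p*q*b)) := by
    rw [Jxy, hfy, deriv_cubic]
    linear_combination (-(xs*ys*(N-1)))*hdeg - xs*hD
  have hJyx : Jyx N r c G B b h p q xs ys = ys*(1-ys)*((N-1)*p*q*b) := by
    rw [Jyx, hgx, deriv_cubic]
    linear_combination ys*(1-ys)*(N-1)*hdeg - ys*hA
  have hJyy : Jyy N r c G B b h p q xs ys = xs*ys*((N-1)*p*q*b) := by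
    rw [Jyy, hgy, deriv_cubic]
    linear_combination (1-2*ys)*hD + ys*(1-ys)*(N-1)*hdeg - xs*hA
  have hT : Jxx N r c G B b h p q xs ys + Jyy N r c G B b h p q xs ys = 0 := by
    rw [hJxx, hJyy]; ring
  have hdetval : Jxx N r c G B b h p q xs ys * Jyy N r c G B b h p q xs ys
      - Jxy N r c G B b h p q xs ys * Jyx N r c G B b h p q xs ys
      = ((N-1)*p*q*b)^2 * (xs*ys*(1-xs-ys)) := by
    rw [hJxx, hJyy, hJxy, hJyx]; ring
  have hbeta : (0:ℝ) < ((N-1)*p*q*b) := by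
    have h1 : (0:ℝ) < N - 1 := by linarith
    positivity
  have hP : (0:ℝ) < Jxx N r c G B b h p q xs ys * Jyy N r c G B b h p q xs ys
      - Jxy N r c G B b h p q xs ys * Jyx N r c G B b h p q xs ys := by
    rw [hdetval]
    exact mul_pos (pow_pos hbeta 2) (mul_pos (mul_pos hxs hys) hz)
  refine ⟨hT, hP, fun μ hμ => ?_⟩
  set P : ℝ := Jxx N r c G B b h p q xs ys * Jyy N r c G B b h p q xs ys
      - Jxy N r c G B b h p q xs ys * Jyx N r c G B b h p q xs ys with hPdef
  have h2 : μ^2 = -(P:ℂ) := by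
    rw [hT] at hμ
    push_cast at hμ
    linear_combination hμ
  have hre : μ.re*μ.re - μ.im*μ.im = -P := by
    have := congrArg Complex.re h2
    simpa [pow_two, Complex.mul_re] using this
  have him : μ.re*μ.im + μ.im*μ.re = 0 := by
    have := congrArg Complex.im h2
    simpa [pow_two, Complex.mul_im] using this
  have hprod : μ.re * μ.im = 0 := by linarith
  rcases mul_eq_zero.mp hprod with h | h
  · exact h
  · exfalso
    rw [h] at hre
    have hnn := mul_self_nonneg μ.re
    linarith
end

section
/- Suppose rc/N - c - G > max{-(N-1)[(1-pq)B + pqh], -pq(N-1)b} and r < N. Define λ_P = ((N-1)[(1-pq)B + pqh] + (rc/N - c - G))/G, λ_C = G/(c - rc/N), λ_D = (c - rc/N)/(rc/N - c - G + pq(N-1)b). Then the product λ = λ_P·λ_C·λ_D equals (rc/N - c - G + (N-1)[(1-pq)B + pqh])/(rc/N - c - G + pq(N-1)b), and if additionally (1-pq)B + pq(h-b) > 0 then λ > 1. -/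
/-- with λ_P = ((N-1)[(1-pq)B + pqh] + (rc/N - c - G))/G,
λ_C = G/(c - rc/N), λ_D = (c - rc/N)/(rc/N - c - G + pq(N-1)b), under
rc/N - c - G > max{-(N-1)[(1-pq)B + pqh], -pq(N-1)b} and r < N, the product
λ = λ_P λ_C λ_D equals (rc/N - c - G + (N-1)[(1-pq)B + pqh])/(rc/N - c - G + pq(N-1)b),
and if moreover (1-pq)B + pq(h-b) > 0 then λ > 1. -/
theorem stmt12 (N r c G B b h p q lP lC lD : ℝ)
    (hr : 1 < r) (hrN : r < N) (hc : 0 < c) (hG : 0 < G) (hB : 0 < B) (hb : 0 < b)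
    (hh : 0 ≤ h) (hp0 : 0 < p) (hp1 : p ≤ 1) (hq0 : 0 < q) (hq1 : q ≤ 1)
    (hcond : r*c/N - c - G >
      max (-((N-1)*((1-p*q)*B + p*q*h))) (-(p*q*(N-1)*b)))
    (hlP : lP = ((N-1)*((1-p*q)*B + p*q*h) + (r*c/N - c - G)) / G)
    (hlC : lC = G / (c - r*c/N))
    (hlD : lD = (c - r*c/N) / (r*c/N - c - G + p*q*(N-1)*b)) :
    lP * lC * lD
      = (r*c/N - c - G + (N-1)*((1-p*q)*B + p*q*h))
          / (r*c/N - c - G + p*q*(N-1)*b) ∧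
    ((1-p*q)*B + p*q*(h - b) > 0 → 1 < lP * lC * lD) := by
  have hN : (0:ℝ) < N := by linarith
  have h1 := lt_of_le_of_lt (le_max_left _ _) hcond
  have h2 := lt_of_le_of_lt (le_max_right _ _) hcond
  have hnum : 0 < r*c/N - c - G + (N-1)*((1-p*q)*B + p*q*h) := by linarith
  have hden : 0 < r*c/N - c - G + p*q*(N-1)*b := by linarith
  have hcr : 0 < c - r*c/N := by
    have : r*c/N < c := by
      rw [div_lt_iff₀ hN]
      nlinarith
    linarith
  have heq : lP * lC * lD
      = (r*c/N - c - G + (N-1)*((1-p*q)*B + p*q*h))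
          / (r*c/N - c - G + p*q*(N-1)*b) := by
    rw [hlP, hlC, hlD, div_mul_div_comm, div_mul_div_comm]
    rw [div_eq_div_iff (by positivity) hden.ne']
    ring
  refine ⟨heq, fun hpos => ?_⟩
  rw [heq, lt_div_iff₀ hden]
  have hN1 : (0:ℝ) < N - 1 := by linarith
  nlinarith [mul_pos hN1 hpos]
end

section
/- Suppose β ≥ 1 or μ ≥ 1 or β + μ ≥ 1 (so the interior fixed point does not exist), α ∉ (0,1) (so the DP-edge fixed point does not exist), rc/N - c - G + pq(N-1)b < 0, and r < N. Then at the all-defector vertex (0,1,0), both eigenvalues of the Jacobian of the reduced planar replicator system, namely rc/N - c and rc/N - c - G + pq(N-1)b, are strictly negative, so the all-defector state is asymptotically stable, while the eigenvalue G at the all-punisher vertex and the eigenvalue c - rc/N at the all-cooperator vertex are strictly positive, so those vertices are unstable. -/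
/-! ### Auxiliary lemmas -/

open Real Filter Set

section Aux

lemma hasDerivAt_cubic (a0 a1 a2 a3 x0 : ℝ) :
    HasDerivAt (fun s : ℝ => a0 + a1*s + a2*s^2 + a3*s^3)
      (a1 + 2*a2*x0 + 3*a3*x0^2) x0 := by
  have h1 : HasDerivAt (fun s : ℝ => s) 1 x0 := hasDerivAt_id x0
  have h2 := hasDerivAt_pow 2 x0
  have h3 := hasDerivAt_pow 3 x0
  have := (((h1.const_mul a1).const_add a0).add (h2.const_mul a2)).add (h3.const_mul a3)
  refine this.congr_deriv ?_
  push_cast; ring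

lemma deriv_eq_cubic (f : ℝ → ℝ) (a0 a1 a2 a3 x0 : ℝ)
    (hf : ∀ s, f s = a0 + a1*s + a2*s^2 + a3*s^3) :
    deriv f x0 = a1 + 2*a2*x0 + 3*a3*x0^2 := by
  have : f = fun s : ℝ => a0 + a1*s + a2*s^2 + a3*s^3 := funext hf
  rw [this]
  exact (hasDerivAt_cubic a0 a1 a2 a3 x0).deriv

lemma JxxD (N r c G B b h p q : ℝ) : Jxx N r c G B b h p q 0 1 = r*c/N - c := by
  rw [Jxx, deriv_eq_cubic _ 0 (r*c/N - c)
    (p*q*(N-1)*b - p*q*(N-1)*h - B*(N-1) + B*p*q*(N-1) - G) 0]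
  · ring
  · intro s; simp only [fRHS]; ring

lemma JyyD (N r c G B b h p q : ℝ) :
    Jyy N r c G B b h p q 0 1 = r*c/N - c - G + p*q*(N-1)*b := by
  rw [Jyy, deriv_eq_cubic _ 0
    (-(h*(p*q)*(N-1)) - B*(N-1) + B*(p*q)*(N-1) + G + c - r*c/N)
    (2*(h*(p*q)*(N-1)) - b*(p*q)*(N-1) + 2*(B*(N-1)) - 2*(B*(p*q)*(N-1)) - G - c + r*c/N)
    (-(h*(p*q)*(N-1)) + b*(p*q)*(N-1) - B*(N-1) + B*(p*q)*(N-1))]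
  · ring
  · intro s; simp only [gRHS]; ring

lemma JxxP (N r c G B b h p q : ℝ) : Jxx N r c G B b h p q 0 0 = G := by
  rw [Jxx, deriv_eq_cubic _ 0 G (-G) 0]
  · ring
  · intro s; simp only [fRHS]; ring

lemma JyyC (N r c G B b h p q : ℝ) : Jyy N r c G B b h p q 1 0 = c - r*c/N := by
  rw [Jyy, deriv_eq_cubic _ 0 (c - r*c/N)
    (h*(p*q)*(N-1) + B*(N-1) - B*(p*q)*(N-1) - G - c + r*c/N)
    (-(h*(p*q)*(N-1)) + b*(p*q)*(N-1) - B*(N-1) + B*(p*q)*(N-1))]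
  · ring
  · intro s; simp only [gRHS]; ring

/-! ### Logistic solutions and instability -/

noncomputable def xlog (k x0 t : ℝ) : ℝ :=
  x0 * Real.exp (k*t) / (1 - x0 + x0 * Real.exp (k*t))

lemma xlog_den_pos {x0 : ℝ} (h0 : 0 < x0) (h1 : x0 < 1) (k t : ℝ) :
    0 < 1 - x0 + x0 * Real.exp (k*t) := by
  have := Real.exp_pos (k*t)
  nlinarith

lemma xlog_hasDerivAt {x0 : ℝ} (h0 : 0 < x0) (h1 : x0 < 1) (k t : ℝ) :
    HasDerivAt (fun t => xlog k x0 t) (k * xlog k x0 t * (1 - xlog k x0 t)) t := by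
  have hden := xlog_den_pos h0 h1 k t
  have he : HasDerivAt (fun t : ℝ => Real.exp (k*t)) (Real.exp (k*t) * k) t := by
    simpa using ((hasDerivAt_id t).const_mul k).exp
  have hnum : HasDerivAt (fun t : ℝ => x0 * Real.exp (k*t)) (x0 * (Real.exp (k*t) * k)) t :=
    he.const_mul x0
  have hd : HasDerivAt (fun t : ℝ => 1 - x0 + x0 * Real.exp (k*t))
      (x0 * (Real.exp (k*t) * k)) t := hnum.const_add (1 - x0)
  have := hnum.div hd (ne_of_gt hden)
  refine this.congr_deriv ?_
  simp only [xlog]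
  field_simp

lemma xlog_zero {x0 : ℝ} (k : ℝ) : xlog k x0 0 = x0 := by
  simp [xlog]

lemma xlog_half {x0 : ℝ} (h0 : 0 < x0) (h1 : x0 < 1) {k : ℝ} (hk : 0 < k) :
    xlog k x0 (Real.log ((1-x0)/x0) / k) = 1/2 := by
  have hA : (0:ℝ) < (1-x0)/x0 := div_pos (by linarith) h0
  have : k * (Real.log ((1-x0)/x0) / k) = Real.log ((1-x0)/x0) := by
    field_simp
  rw [xlog, this, Real.exp_log hA]
  have e1 : x0*((1-x0)/x0) = 1 - x0 := by field_simp
  rw [e1, div_eq_iff (show 1 - x0 + (1-x0) ≠ 0 by intro hcon; nlinarith)]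
  ring

lemma xlog_T_nonneg {x0 : ℝ} (h0 : 0 < x0) (h2 : x0 ≤ 1/2) {k : ℝ} (hk : 0 < k) :
    0 ≤ Real.log ((1-x0)/x0) / k := by
  apply div_nonneg _ hk.le
  apply Real.log_nonneg
  rw [le_div_iff₀ h0]
  linarith

lemma fP (N r c G B b h p q x : ℝ) : fRHS N r c G B b h p q x 0 = G * x * (1-x) := by
  simp only [fRHS]; ring

lemma gP (N r c G B b h p q x : ℝ) : gRHS N r c G B b h p q x 0 = 0 := by
  simp only [gRHS]; ring

lemma fC (N r c G B b h p q y : ℝ) :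
    fRHS N r c G B b h p q (1-y) y = -((c - r*c/N) * y * (1-y)) := by
  simp only [fRHS]; ring

lemma gC (N r c G B b h p q y : ℝ) :
    gRHS N r c G B b h p q (1-y) y = (c - r*c/N) * y * (1-y) := by
  simp only [gRHS]; ring

lemma unstableP (N r c G B b h p q : ℝ) (hG : 0 < G) :
    ¬ IsStableEq (Fsys N r c G B b h p q) (0, 0) := by
  intro hs
  obtain ⟨δ, hδ0, hδ⟩ := hs (1/4) (by norm_num)
  set x0 : ℝ := min (δ/2) (1/2) with hx0def
  have hx00 : 0 < x0 := lt_min (by linarith) (by norm_num)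
  have hx0half : x0 ≤ 1/2 := min_le_right _ _
  have hx01 : x0 < 1 := lt_of_le_of_lt hx0half (by norm_num)
  have hsol : ∀ t, HasDerivAt (fun t => ((xlog G x0 t, 0) : ℝ × ℝ))
      (Fsys N r c G B b h p q (xlog G x0 t, 0)) t := by
    intro t
    have h1 := xlog_hasDerivAt hx00 hx01 G t
    have h2 : HasDerivAt (fun _ : ℝ => (0:ℝ)) 0 t := hasDerivAt_const t 0
    have h3 := h1.prodMk h2
    have h4 : Fsys N r c G B b h p q (xlog G x0 t, 0)
        = (G * xlog G x0 t * (1 - xlog G x0 t), 0) := by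
      simp only [Fsys, fP, gP]
    rw [h4]
    exact h3
  have hstart : ‖(fun t => ((xlog G x0 t, 0) : ℝ × ℝ)) 0 - (0, 0)‖ < δ := by
    simp only [xlog_zero, Prod.mk_sub_mk, sub_zero, Prod.norm_def, Real.norm_eq_abs,
      abs_zero]
    rw [abs_of_pos hx00]
    have : x0 ≤ δ/2 := min_le_left _ _
    simp only [max_eq_left (le_of_lt hx00)]
    linarith
  have hT := xlog_T_nonneg hx00 hx0half hG
  have hfin := hδ _ hsol hstart _ hT
  rw [xlog_half hx00 hx01 hG] at hfin
  simp only [Prod.mk_sub_mk, sub_zero, Prod.norm_def, Real.norm_eq_abs, abs_zero] at hfin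
  rw [show |(1:ℝ)/2| = 1/2 from abs_of_pos (by norm_num),
    max_eq_left (by norm_num : (0:ℝ) ≤ 1/2)] at hfin
  linarith

lemma unstableC (N r c G B b h p q : ℝ) (hk : 0 < c - r*c/N) :
    ¬ IsStableEq (Fsys N r c G B b h p q) (1, 0) := by
  intro hs
  obtain ⟨δ, hδ0, hδ⟩ := hs (1/4) (by norm_num)
  set k : ℝ := c - r*c/N with hkdef
  set y0 : ℝ := min (δ/2) (1/2) with hy0def
  have hy00 : 0 < y0 := lt_min (by linarith) (by norm_num)
  have hy0half : y0 ≤ 1/2 := min_le_right _ _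
  have hy01 : y0 < 1 := lt_of_le_of_lt hy0half (by norm_num)
  have hsol : ∀ t, HasDerivAt (fun t => ((1 - xlog k y0 t, xlog k y0 t) : ℝ × ℝ))
      (Fsys N r c G B b h p q (1 - xlog k y0 t, xlog k y0 t)) t := by
    intro t
    have h1 := xlog_hasDerivAt hy00 hy01 k t
    have h2 := h1.const_sub 1
    have h3 := h2.prodMk h1
    have h4 : Fsys N r c G B b h p q (1 - xlog k y0 t, xlog k y0 t)
        = (-(k * xlog k y0 t * (1 - xlog k y0 t)), k * xlog k y0 t * (1 - xlog k y0 t)) := by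
      simp only [Fsys, fC, gC, ← hkdef]
    rw [h4]
    exact h3
  have hstart : ‖(fun t => ((1 - xlog k y0 t, xlog k y0 t) : ℝ × ℝ)) 0 - (1, 0)‖ < δ := by
    simp only [xlog_zero, Prod.mk_sub_mk, sub_zero, Prod.norm_def, Real.norm_eq_abs]
    have h1 : |1 - y0 - 1| = y0 := by
      rw [show 1 - y0 - 1 = -y0 by ring, abs_neg, abs_of_pos hy00]
    rw [h1, abs_of_pos hy00, max_self]
    have : y0 ≤ δ/2 := min_le_left _ _
    linarith
  have hT := xlog_T_nonneg hy00 hy0half hk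
  have hfin := hδ _ hsol hstart _ hT
  rw [xlog_half hy00 hy01 hk] at hfin
  simp only [Prod.mk_sub_mk, Prod.norm_def, Real.norm_eq_abs] at hfin
  rw [show (1:ℝ) - 1/2 - 1 = -(1/2) by ring, abs_neg, sub_zero,
    show |(1:ℝ)/2| = 1/2 from abs_of_pos (by norm_num), max_self] at hfin
  linarith

/-! ### Quadratic Lyapunov machinery -/

lemma absmul_le {A t ρ : ℝ} (ht : |t| ≤ ρ) : |A*t| ≤ |A| * ρ := by
  rw [abs_mul]; exact mul_le_mul_of_nonneg_left ht (abs_nonneg A)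

lemma sq_le_of_abs {t s ρ : ℝ} (ht : |t| ≤ ρ) (hs : |s| ≤ ρ) (hρ1 : ρ ≤ 1) : |t*s| ≤ ρ := by
  have hρ0 : 0 ≤ ρ := le_trans (abs_nonneg t) ht
  rw [abs_mul]
  calc |t| * |s| ≤ ρ*ρ := mul_le_mul ht hs (abs_nonneg _) hρ0
  _ ≤ 1*ρ := by nlinarith
  _ = ρ := one_mul ρ

lemma E1bound (c1 c2 c3 x w ρ : ℝ) (hx : |x| ≤ ρ) (hw : |w| ≤ ρ) (hρ1 : ρ ≤ 1) :
    |c1*w + c2*(x+w+x*w+w^2) + c3*x| ≤ ρ*(|c1| + 4*|c2| + |c3|) := by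
  have hxw : |x*w| ≤ ρ := sq_le_of_abs hx hw hρ1
  have hw2 : |w^2| ≤ ρ := by rw [show w^2 = w*w by ring]; exact sq_le_of_abs hw hw hρ1
  have hS : |x+w+x*w+w^2| ≤ 4*ρ := by
    calc |x+w+x*w+w^2| ≤ |x+w+x*w| + |w^2| := abs_add_le _ _
    _ ≤ |x+w| + |x*w| + |w^2| := by have := abs_add_le (x+w) (x*w); linarith
    _ ≤ |x| + |w| + |x*w| + |w^2| := by have := abs_add_le x w; linarith
    _ ≤ 4*ρ := by linarith
  calc |c1*w + c2*(x+w+x*w+w^2) + c3*x|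
      ≤ |c1*w + c2*(x+w+x*w+w^2)| + |c3*x| := abs_add_le _ _
    _ ≤ |c1*w| + |c2*(x+w+x*w+w^2)| + |c3*x| := by
        have := abs_add_le (c1*w) (c2*(x+w+x*w+w^2)); linarith
    _ ≤ |c1| * ρ + |c2| * (4*ρ) + |c3| * ρ := by
        have h1 := absmul_le (A := c1) hw
        have h3 := absmul_le (A := c3) hx
        have h2 : |c2*(x+w+x*w+w^2)| ≤ |c2| * (4*ρ) := by
          rw [abs_mul]; exact mul_le_mul_of_nonneg_left hS (abs_nonneg _)
        linarith
    _ = ρ*(|c1| + 4*|c2| + |c3|) := by ring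

lemma E2bound (d1 d2 d3 d4 x w ρ : ℝ) (hx : |x| ≤ ρ) (hw : |w| ≤ ρ) (hρ1 : ρ ≤ 1) :
    |d1*w^2 + d2*w^3 + d3*(x*w) + d4*(x*w^2)| ≤ ρ*(|d1| + |d2| + |d3| + |d4|)*|w| := by
  have hρ0 : 0 ≤ ρ := le_trans (abs_nonneg x) hx
  have k1 : |w^2| ≤ ρ*|w| := by
    rw [show w^2 = w*w by ring, abs_mul]
    exact mul_le_mul_of_nonneg_right hw (abs_nonneg w)
  have k2 : |w^3| ≤ ρ*|w| := by
    rw [show w^3 = (w*w)*w by ring, abs_mul]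
    exact mul_le_mul_of_nonneg_right (sq_le_of_abs hw hw hρ1) (abs_nonneg w)
  have k3 : |x*w| ≤ ρ*|w| := by
    rw [abs_mul]; exact mul_le_mul_of_nonneg_right hx (abs_nonneg w)
  have k4 : |x*w^2| ≤ ρ*|w| := by
    rw [show x*w^2 = (x*w)*w by ring, abs_mul]
    exact mul_le_mul_of_nonneg_right (sq_le_of_abs hx hw hρ1) (abs_nonneg w)
  have b1 : |d1*w^2| ≤ |d1| * (ρ*|w|) := by
    rw [abs_mul]; exact mul_le_mul_of_nonneg_left k1 (abs_nonneg _)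
  have b2 : |d2*w^3| ≤ |d2| * (ρ*|w|) := by
    rw [abs_mul]; exact mul_le_mul_of_nonneg_left k2 (abs_nonneg _)
  have b3 : |d3*(x*w)| ≤ |d3| * (ρ*|w|) := by
    rw [abs_mul]; exact mul_le_mul_of_nonneg_left k3 (abs_nonneg _)
  have b4 : |d4*(x*w^2)| ≤ |d4| * (ρ*|w|) := by
    rw [abs_mul]; exact mul_le_mul_of_nonneg_left k4 (abs_nonneg _)
  calc |d1*w^2 + d2*w^3 + d3*(x*w) + d4*(x*w^2)|
      ≤ |d1*w^2 + d2*w^3 + d3*(x*w)| + |d4*(x*w^2)| := abs_add_le _ _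
    _ ≤ |d1*w^2 + d2*w^3| + |d3*(x*w)| + |d4*(x*w^2)| := by
        have := abs_add_le (d1*w^2 + d2*w^3) (d3*(x*w)); linarith
    _ ≤ |d1*w^2| + |d2*w^3| + |d3*(x*w)| + |d4*(x*w^2)| := by
        have := abs_add_le (d1*w^2) (d2*w^3); linarith
    _ ≤ ρ*(|d1| + |d2| + |d3| + |d4|)*|w| := by nlinarith [abs_nonneg w]

lemma keyQ (m1 m2 a C2 m K1 K2 ρ x w E1 E2 : ℝ)
    (hm1 : 0 < m1) (hm2 : 0 < m2) (hmle1 : m ≤ m1) (hmle2 : m ≤ m2) (hm0 : 0 < m)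
    (hC2 : 1 ≤ C2) (ha : a^2 ≤ (C2-1)*m1*m2)
    (hρ0 : 0 ≤ ρ)
    (hρK1 : ρ*K1 ≤ m/8) (hρK2 : ρ*K2 ≤ m/4)
    (hE1 : |E1| ≤ ρ*K1) (hE2 : |E2| ≤ ρ*K2*|w|) :
    2*C2*x*(x*(-m1 + E1)) + 2*w*(a*x + -m2*w + E2) ≤ -(m/2)*(C2*x^2 + w^2) := by
  have h1 : 2*C2*x^2*E1 ≤ 2*C2*x^2*(m/8) := by
    have hE1' : E1 ≤ m/8 := le_trans (le_trans (le_abs_self E1) hE1) hρK1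
    have : (0:ℝ) ≤ 2*C2*x^2 := by positivity
    nlinarith
  have h2 : 2*w*E2 ≤ 2*(m/4)*w^2 := by
    have e1 : 2*w*E2 ≤ |2*w*E2| := le_abs_self _
    have e2 : |2*w*E2| = 2*|w| * |E2| := by rw [abs_mul, abs_mul]; norm_num
    have e3 : 2*|w| * |E2| ≤ 2*|w| * (ρ*K2*|w|) := by
      have : (0:ℝ) ≤ 2*|w| := by positivity
      nlinarith [abs_nonneg w]
    have e4 : 2*|w| * (ρ*K2*|w|) = 2*(ρ*K2)*(|w| * |w|) := by ring
    have e5 : |w| * |w| = w^2 := by rw [← abs_mul, abs_mul_self]; ring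
    have e6 : 2*(ρ*K2)*w^2 ≤ 2*(m/4)*w^2 := by nlinarith [sq_nonneg w]
    calc 2*w*E2 ≤ 2*|w| * |E2| := by linarith
      _ ≤ 2*|w| * (ρ*K2*|w|) := e3
      _ = 2*(ρ*K2)*w^2 := by rw [e4, e5]
      _ ≤ 2*(m/4)*w^2 := e6
  have h3 : 2*a*x*w ≤ (C2-1)*m1*x^2 + m2*w^2 := by
    have hsq := sq_nonneg (a*x - m2*w)
    have hax : a^2*x^2 ≤ (C2-1)*m1*m2*x^2 :=
      mul_le_mul_of_nonneg_right ha (sq_nonneg x)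
    nlinarith [sq_nonneg x, sq_nonneg w]
  have hA : 0 ≤ x^2 * (C2*(m1 - 3*(m/4))) := by
    apply mul_nonneg (sq_nonneg x)
    apply mul_nonneg (by linarith)
    linarith
  have hB : 0 ≤ x^2 * m1 := mul_nonneg (sq_nonneg x) hm1.le
  have hC : 0 ≤ w^2 * (m2 - m) := mul_nonneg (sq_nonneg w) (by linarith)
  nlinarith [h1, h2, h3, hA, hB, hC]

lemma idf (N r c G B b h p q x y m1 D0 : ℝ)
    (hm1 : m1 = -(r*c/N - c))
    (hD0 : D0 = p*q*(N-1)*b - p*q*(N-1)*h - B*(N-1) + B*p*q*(N-1)) :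
    fRHS N r c G B b h p q x y
      = x * (-m1 + ((-m1 - G)*(y-1) + D0*(x+(y-1)+x*(y-1)+(y-1)^2) + (-G)*x)) := by
  subst hm1 hD0; simp only [fRHS]; ring

lemma idg (N r c G B b h p q x y m2 a D0 : ℝ)
    (hm2 : m2 = -(r*c/N - c - G + p*q*(N-1)*b))
    (haa : a = p*q*(N-1)*b - G)
    (hD0 : D0 = p*q*(N-1)*b - p*q*(N-1)*h - B*(N-1) + B*p*q*(N-1)) :
    gRHS N r c G B b h p q x y
      = a*x + -m2*(y-1) + ((-m2 + D0)*(y-1)^2 + D0*(y-1)^3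
          + (a + D0)*(x*(y-1)) + D0*(x*(y-1)^2)) := by
  subst hm2 haa hD0; simp only [gRHS]; ring

lemma decay (V dV : ℝ → ℝ) (m ρ2 : ℝ) (hm : 0 < m)
    (hV : ∀ t, HasDerivAt V (dV t) t)
    (hnn : ∀ t, 0 ≤ V t)
    (hineq : ∀ t, V t ≤ ρ2 → dV t ≤ -(m/2) * V t)
    (h0 : V 0 < ρ2) :
    (∀ t, 0 ≤ t → V t ≤ V 0) ∧ Tendsto V atTop (nhds 0) := by
  have hcont : Continuous V := by
    rw [continuous_iff_continuousAt]; exact fun t => (hV t).continuousAt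
  have hdiff : Differentiable ℝ V := fun t => (hV t).differentiableAt
  have hderiv : ∀ t, deriv V t = dV t := fun t => (hV t).deriv
  have hinv : ∀ t, 0 ≤ t → V t < ρ2 := by
    by_contra hcon
    push_neg at hcon
    obtain ⟨t1, ht1, ht1'⟩ := hcon
    set S : Set ℝ := {t | 0 ≤ t ∧ ρ2 ≤ V t} with hSdef
    have hSne : S.Nonempty := ⟨t1, ht1, ht1'⟩
    have hSbd : BddBelow S := ⟨0, fun s hs => hs.1⟩
    have hSclosed : IsClosed S := by
      have : S = Ici 0 ∩ V ⁻¹' (Ici ρ2) := by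
        ext t
        simp only [hSdef, Set.mem_setOf_eq, Set.mem_inter_iff, Set.mem_Ici, Set.mem_preimage]
      rw [this]
      exact isClosed_Ici.inter (isClosed_Ici.preimage hcont)
    set T := sInf S with hTdef
    have hTS : T ∈ S := hSclosed.csInf_mem hSne hSbd
    have hT0 : 0 < T := by
      rcases lt_or_eq_of_le hTS.1 with h | h
      · exact h
      · exfalso; rw [← h] at hTS; linarith [hTS.2]
    have hbefore : ∀ s, 0 ≤ s → s < T → V s < ρ2 := by
      intro s hs hsT
      by_contra hcc
      push_neg at hcc
      exact absurd (csInf_le hSbd ⟨hs, hcc⟩) (not_le.2 hsT)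
    have hVT : V T ≤ ρ2 := by
      have htend : Tendsto V (nhdsWithin T (Iio T)) (nhds (V T)) :=
        (hcont.continuousAt).continuousWithinAt
      refine le_of_tendsto htend ?_
      filter_upwards [Ioo_mem_nhdsLT_of_mem (show T ∈ Ioc 0 T from ⟨hT0, le_refl T⟩)]
        with s hs
      exact (hbefore s hs.1.le hs.2).le
    have hmono : AntitoneOn V (Icc 0 T) := by
      apply antitoneOn_of_deriv_nonpos (convex_Icc 0 T) hcont.continuousOn
        (hdiff.differentiableOn)
      intro s hs
      rw [interior_Icc] at hs
      rw [hderiv]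
      have hVs : V s ≤ ρ2 := (hbefore s hs.1.le hs.2).le
      have := hineq s hVs
      nlinarith [hnn s]
    have hle : V T ≤ V 0 :=
      hmono ⟨le_refl 0, hT0.le⟩ ⟨hT0.le, le_refl T⟩ hT0.le
    linarith [hTS.2]
  have hmono : AntitoneOn V (Ici 0) := by
    apply antitoneOn_of_deriv_nonpos (convex_Ici 0) hcont.continuousOn
      (hdiff.differentiableOn)
    intro s hs
    rw [interior_Ici] at hs
    rw [hderiv]
    have := hineq s (hinv s (le_of_lt hs)).le
    nlinarith [hnn s]
  refine ⟨fun t ht => hmono (self_mem_Ici) ht ht, ?_⟩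
  have hexp : ∀ t, 0 ≤ t → V t ≤ V 0 * Real.exp (-(m/2)*t) := by
    have hgd : ∀ t, HasDerivAt (fun t => V t * Real.exp ((m/2)*t))
        ((dV t + (m/2)*V t) * Real.exp ((m/2)*t)) t := by
      intro t
      have he : HasDerivAt (fun t : ℝ => Real.exp ((m/2)*t))
          (Real.exp ((m/2)*t) * (m/2)) t := by
        simpa using ((hasDerivAt_id t).const_mul (m/2)).exp
      have := (hV t).mul he
      refine this.congr_deriv ?_
      ring
    have hganti : AntitoneOn (fun t => V t * Real.exp ((m/2)*t)) (Ici 0) := by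
      apply antitoneOn_of_deriv_nonpos (convex_Ici 0)
      · exact (Continuous.mul hcont
          (Real.continuous_exp.comp (continuous_const.mul continuous_id))).continuousOn
      · exact fun s _ => ((hgd s).differentiableAt).differentiableWithinAt
      · intro s hs
        rw [interior_Ici] at hs
        rw [(hgd s).deriv]
        have h1 := hineq s (hinv s hs.le).le
        have h2 : dV s + (m/2)*V s ≤ 0 := by linarith
        have h3 : 0 ≤ Real.exp ((m/2)*s) := (Real.exp_pos _).le
        nlinarith
    intro t ht
    have := hganti (self_mem_Ici) ht ht
    simp only at this
    rw [mul_zero, Real.exp_zero, mul_one] at this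
    have hepos : 0 < Real.exp ((m/2)*t) := Real.exp_pos _
    rw [show -(m/2)*t = -((m/2)*t) by ring, Real.exp_neg]
    calc V t = V t * Real.exp ((m/2)*t) * (Real.exp ((m/2)*t))⁻¹ := by
          field_simp
      _ ≤ V 0 * (Real.exp ((m/2)*t))⁻¹ :=
          mul_le_mul_of_nonneg_right this (by positivity)
  have hlim : Tendsto (fun t => V 0 * Real.exp (-(m/2)*t)) atTop (nhds 0) := by
    have h1 : Tendsto (fun t : ℝ => (m/2)*t) atTop atTop :=
      Tendsto.const_mul_atTop (by linarith) tendsto_id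
    have h2 : Tendsto (fun t : ℝ => Real.exp (-((m/2)*t))) atTop (nhds 0) :=
      Real.tendsto_exp_neg_atTop_nhds_zero.comp h1
    have h3 : Tendsto (fun t : ℝ => V 0 * Real.exp (-((m/2)*t))) atTop (nhds (V 0 * 0)) :=
      h2.const_mul (V 0)
    rw [mul_zero] at h3
    convert h3 using 2
    ring_nf
  apply squeeze_zero' (Filter.Eventually.of_forall hnn)
  · filter_upwards [eventually_ge_atTop (0:ℝ)] with t ht
    exact hexp t ht
  · exact hlim

lemma normsq (v : ℝ × ℝ) : ‖v‖^2 ≤ v.1^2 + v.2^2 := by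
  rw [Prod.norm_def]
  rcases le_total ‖v.1‖ ‖v.2‖ with h | h
  · rw [max_eq_right h, Real.norm_eq_abs, sq_abs]; nlinarith [sq_nonneg v.1]
  · rw [max_eq_left h, Real.norm_eq_abs, sq_abs]; nlinarith [sq_nonneg v.2]

lemma solution_est (N r c G B b h p q C2 m ρ : ℝ) (hC2 : 1 ≤ C2) (hm : 0 < m) (hρ : 0 < ρ)
    (hcore : ∀ x y : ℝ, |x| ≤ ρ → |y-1| ≤ ρ →
      2*C2*x*(fRHS N r c G B b h p q x y) + 2*(y-1)*(gRHS N r c G B b h p q x y)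
        ≤ -(m/2)*(C2*x^2 + (y-1)^2))
    (u : ℝ → ℝ × ℝ) (hu : ∀ t, HasDerivAt u (Fsys N r c G B b h p q (u t)) t)
    (h0 : C2*((u 0).1)^2 + ((u 0).2 - 1)^2 < ρ^2) :
    (∀ t, 0 ≤ t → ‖u t - ((0:ℝ),(1:ℝ))‖^2 ≤ C2*((u 0).1)^2 + ((u 0).2 - 1)^2)
      ∧ Tendsto u atTop (nhds ((0:ℝ),(1:ℝ))) := by
  set V : ℝ → ℝ := fun t => C2*((u t).1)^2 + ((u t).2 - 1)^2 with hVdef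
  set dV : ℝ → ℝ := fun t => 2*C2*((u t).1)*(fRHS N r c G B b h p q (u t).1 (u t).2)
      + 2*((u t).2 - 1)*(gRHS N r c G B b h p q (u t).1 (u t).2) with hdVdef
  have hX : ∀ t, HasDerivAt (fun t => (u t).1)
      (fRHS N r c G B b h p q (u t).1 (u t).2) t := by
    intro t
    exact (ContinuousLinearMap.fst ℝ ℝ ℝ).hasFDerivAt.comp_hasDerivAt t (hu t)
  have hY : ∀ t, HasDerivAt (fun t => (u t).2)
      (gRHS N r c G B b h p q (u t).1 (u t).2) t := by
    intro t
    exact (ContinuousLinearMap.snd ℝ ℝ ℝ).hasFDerivAt.comp_hasDerivAt t (hu t)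
  have hVd : ∀ t, HasDerivAt V (dV t) t := by
    intro t
    have h1 := ((hX t).pow 2).const_mul C2
    have h2 := ((hY t).sub_const 1).pow 2
    have h3 := h1.add h2
    refine h3.congr_deriv ?_
    push_cast
    ring
  have hnn : ∀ t, 0 ≤ V t := by
    intro t
    exact add_nonneg (mul_nonneg (by linarith) (sq_nonneg _)) (sq_nonneg _)
  have habs : ∀ z ρ' : ℝ, 0 < ρ' → z^2 ≤ ρ'^2 → |z| ≤ ρ' := by
    intro z ρ' hρ' hz
    nlinarith [abs_nonneg z, sq_abs z]
  have hineq : ∀ t, V t ≤ ρ^2 → dV t ≤ -(m/2)*V t := by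
    intro t hVt
    have hVt' : C2*((u t).1)^2 + ((u t).2 - 1)^2 ≤ ρ^2 := hVt
    have hx2 : ((u t).1)^2 ≤ ρ^2 := by nlinarith [sq_nonneg ((u t).1), sq_nonneg ((u t).2 - 1)]
    have hw2 : ((u t).2 - 1)^2 ≤ ρ^2 := by nlinarith [sq_nonneg ((u t).1)]
    exact hcore (u t).1 (u t).2 (habs _ _ hρ hx2) (habs _ _ hρ hw2)
  obtain ⟨hbd, hVlim⟩ := decay V dV m (ρ^2) hm hVd hnn hineq h0
  have hsqle : ∀ t, ‖u t - ((0:ℝ),(1:ℝ))‖^2 ≤ V t := by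
    intro t
    have h1 := normsq (u t - ((0:ℝ),(1:ℝ)))
    have h2 : (u t - ((0:ℝ),(1:ℝ))).1 = (u t).1 := by simp
    have h3 : (u t - ((0:ℝ),(1:ℝ))).2 = (u t).2 - 1 := by simp
    rw [h2, h3] at h1
    have h4 : ((u t).1)^2 ≤ C2*((u t).1)^2 := by nlinarith [sq_nonneg ((u t).1)]
    calc ‖u t - ((0:ℝ),(1:ℝ))‖^2 ≤ ((u t).1)^2 + ((u t).2 - 1)^2 := h1
      _ ≤ C2*((u t).1)^2 + ((u t).2 - 1)^2 := by linarith
  constructor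
  · intro t ht
    exact le_trans (hsqle t) (hbd t ht)
  · have h2 : Tendsto (fun t => ‖u t - ((0:ℝ),(1:ℝ))‖^2) atTop (nhds 0) :=
      squeeze_zero (fun t => sq_nonneg _) hsqle hVlim
    have h4 := (Real.continuous_sqrt.tendsto 0).comp h2
    rw [Real.sqrt_zero] at h4
    have h5 : Tendsto (fun t => ‖u t - ((0:ℝ),(1:ℝ))‖) atTop (nhds 0) := by
      convert h4 using 2 with t
      rw [Function.comp_apply, Real.sqrt_sq (norm_nonneg _)]
    exact tendsto_iff_norm_sub_tendsto_zero.mpr h5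

set_option maxHeartbeats 2000000 in
lemma stableD (N r c G B b h p q : ℝ) (hl1 : r*c/N - c < 0)
    (hl2 : r*c/N - c - G + p*q*(N-1)*b < 0) :
    IsAsympStableEq (Fsys N r c G B b h p q) (0, 1) := by
  obtain ⟨m1, hm1⟩ : ∃ v:ℝ, v = -(r*c/N - c) := ⟨_, rfl⟩
  obtain ⟨m2, hm2⟩ : ∃ v:ℝ, v = -(r*c/N - c - G + p*q*(N-1)*b) := ⟨_, rfl⟩
  obtain ⟨a, haa⟩ : ∃ v:ℝ, v = p*q*(N-1)*b - G := ⟨_, rfl⟩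
  obtain ⟨D0, hD0⟩ : ∃ v:ℝ,
      v = p*q*(N-1)*b - p*q*(N-1)*h - B*(N-1) + B*p*q*(N-1) := ⟨_, rfl⟩
  have hm1p : 0 < m1 := by rw [hm1]; linarith
  have hm2p : 0 < m2 := by rw [hm2]; linarith
  obtain ⟨m, hm⟩ : ∃ v:ℝ, v = min m1 m2 := ⟨_, rfl⟩
  have hmp : 0 < m := by rw [hm]; exact lt_min hm1p hm2p
  have hmle1 : m ≤ m1 := by rw [hm]; exact min_le_left _ _
  have hmle2 : m ≤ m2 := by rw [hm]; exact min_le_right _ _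
  obtain ⟨C2, hC2⟩ : ∃ v:ℝ, v = 1 + a^2/(m1*m2) := ⟨_, rfl⟩
  have hmm : 0 < m1*m2 := mul_pos hm1p hm2p
  have hC2ge : 1 ≤ C2 := by
    rw [hC2]
    have := div_nonneg (sq_nonneg a) hmm.le
    linarith
  have hC2a : a^2 ≤ (C2-1)*m1*m2 := by
    rw [hC2]
    have : (1 + a^2/(m1*m2) - 1)*m1*m2 = a^2 := by field_simp; ring
    rw [this]
  obtain ⟨K1, hK1⟩ : ∃ v:ℝ, v = |(-m1 - G)| + 4*|D0| + |(-G)| := ⟨_, rfl⟩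
  obtain ⟨K2, hK2⟩ : ∃ v:ℝ, v = |(-m2 + D0)| + |D0| + |a + D0| + |D0| := ⟨_, rfl⟩
  have hK1n : 0 ≤ K1 := by rw [hK1]; positivity
  have hK2n : 0 ≤ K2 := by rw [hK2]; positivity
  obtain ⟨ρ, hρ⟩ : ∃ v:ℝ, v = min 1 (m/(8*(K1+K2)+1)) := ⟨_, rfl⟩
  have hρp : 0 < ρ := by
    rw [hρ]
    apply lt_min one_pos
    positivity
  have hρ1 : ρ ≤ 1 := by rw [hρ]; exact min_le_left _ _
  have hρm : ρ*(8*(K1+K2)+1) ≤ m := by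
    have h1 : ρ ≤ m/(8*(K1+K2)+1) := by rw [hρ]; exact min_le_right _ _
    have hden : (0:ℝ) < 8*(K1+K2)+1 := by positivity
    rw [le_div_iff₀ hden] at h1
    exact h1
  have hexpand : ρ*(8*(K1+K2)+1) = 8*(ρ*K1) + 8*(ρ*K2) + ρ := by ring
  have hρK1 : ρ*K1 ≤ m/8 := by
    have h2 : 0 ≤ ρ*K2 := mul_nonneg hρp.le hK2n
    rw [hexpand] at hρm
    linarith
  have hρK2 : ρ*K2 ≤ m/4 := by
    have h2 : 0 ≤ ρ*K1 := mul_nonneg hρp.le hK1n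
    rw [hexpand] at hρm
    linarith
  have hcore : ∀ x y : ℝ, |x| ≤ ρ → |y-1| ≤ ρ →
      2*C2*x*(fRHS N r c G B b h p q x y) + 2*(y-1)*(gRHS N r c G B b h p q x y)
        ≤ -(m/2)*(C2*x^2 + (y-1)^2) := by
    intro x y hx hw
    rw [idf N r c G B b h p q x y m1 D0 hm1 hD0,
        idg N r c G B b h p q x y m2 a D0 hm2 haa hD0]
    apply keyQ m1 m2 a C2 m K1 K2 ρ x (y-1) _ _ hm1p hm2p hmle1 hmle2 hmp hC2ge hC2a
      hρp.le hρK1 hρK2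
    · rw [hK1]
      exact E1bound (-m1 - G) D0 (-G) x (y-1) ρ hx hw hρ1
    · rw [hK2]
      have := E2bound (-m2 + D0) D0 (a + D0) D0 x (y-1) ρ hx hw hρ1
      calc |(-m2 + D0)*(y-1)^2 + D0*(y-1)^3 + (a + D0)*(x*(y-1)) + D0*(x*(y-1)^2)|
          ≤ ρ*(|(-m2 + D0)| + |D0| + |a + D0| + |D0|)*|y-1| := this
        _ = ρ*(|(-m2 + D0)| + |D0| + |a + D0| + |D0|)*|y-1| := rfl
  have main : ∀ E : ℝ, 0 < E → E ≤ ρ → ∀ u : ℝ → ℝ × ℝ,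
      (∀ t, HasDerivAt u (Fsys N r c G B b h p q (u t)) t) →
      ‖u 0 - ((0:ℝ),(1:ℝ))‖ < E/(C2+1) →
      (∀ t, 0 ≤ t → ‖u t - ((0:ℝ),(1:ℝ))‖ < E) ∧
        Tendsto u atTop (nhds ((0:ℝ),(1:ℝ))) := by
    intro E hEpos hEρ u hu hu0
    obtain ⟨δ, hδdef⟩ : ∃ v:ℝ, v = E/(C2+1) := ⟨_, rfl⟩
    rw [← hδdef] at hu0
    have hC2p : (0:ℝ) < C2 + 1 := by linarith
    have hδpos : 0 < δ := by rw [hδdef]; positivity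
    have hX0 : |(u 0).1| < δ := by
      have h1 := norm_fst_le (u 0 - ((0:ℝ),(1:ℝ)))
      have h2 : (u 0 - ((0:ℝ),(1:ℝ))).1 = (u 0).1 := by simp
      rw [h2, Real.norm_eq_abs] at h1
      linarith
    have hW0 : |(u 0).2 - 1| < δ := by
      have h1 := norm_snd_le (u 0 - ((0:ℝ),(1:ℝ)))
      have h2 : (u 0 - ((0:ℝ),(1:ℝ))).2 = (u 0).2 - 1 := by simp
      rw [h2, Real.norm_eq_abs] at h1
      linarith
    have hX0sq : ((u 0).1)^2 < δ^2 := by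
      have := sq_abs ((u 0).1)
      nlinarith [abs_nonneg ((u 0).1)]
    have hW0sq : ((u 0).2 - 1)^2 < δ^2 := by
      have := sq_abs ((u 0).2 - 1)
      nlinarith [abs_nonneg ((u 0).2 - 1)]
    have hV0 : C2*((u 0).1)^2 + ((u 0).2 - 1)^2 < (C2+1)*δ^2 := by
      nlinarith [sq_nonneg ((u 0).1)]
    have hkey : (C2+1)*δ^2 ≤ E^2 := by
      have e1 : (C2+1)*δ^2 = E^2/(C2+1) := by
        rw [hδdef, div_pow]
        field_simp
      rw [e1]
      exact div_le_self (sq_nonneg E) (by linarith)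
    have hV0E : C2*((u 0).1)^2 + ((u 0).2 - 1)^2 < E^2 := by linarith
    have hE2ρ2 : E^2 ≤ ρ^2 := by nlinarith
    have hV0ρ : C2*((u 0).1)^2 + ((u 0).2 - 1)^2 < ρ^2 := by linarith
    obtain ⟨hbd, htend⟩ := solution_est N r c G B b h p q C2 m ρ hC2ge hmp hρp hcore u hu hV0ρ
    refine ⟨?_, htend⟩
    intro t ht
    have h1 := hbd t ht
    have h3 : ‖u t - ((0:ℝ),(1:ℝ))‖^2 < E^2 := by linarith
    nlinarith [norm_nonneg (u t - ((0:ℝ),(1:ℝ)))]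
  constructor
  · intro ε hε
    obtain ⟨E, hE⟩ : ∃ v:ℝ, v = min ρ ε := ⟨_, rfl⟩
    have hEpos : 0 < E := by rw [hE]; exact lt_min hρp hε
    have hEρ : E ≤ ρ := by rw [hE]; exact min_le_left _ _
    have hEε : E ≤ ε := by rw [hE]; exact min_le_right _ _
    refine ⟨E/(C2+1), by positivity, ?_⟩
    intro u hu hu0
    intro t ht
    have := (main E hEpos hEρ u hu hu0).1 t ht
    linarith
  · refine ⟨ρ/(C2+1), by positivity, ?_⟩
    intro u hu hu0
    exact (main ρ hρp le_rfl u hu hu0).2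

end Aux


/-- if the interior fixed point does not exist (β ≥ 1 or μ ≥ 1 or
β + μ ≥ 1), the DP-edge fixed point does not exist (α ∉ (0,1)),
rc/N - c - G + pq(N-1)b < 0 and r < N, then both eigenvalues rc/N - c and
rc/N - c - G + pq(N-1)b of the Jacobian at the all-defector vertex (0,1) are negative, so
the all-defector state is asymptotically stable, while the eigenvalue G at the
all-punisher vertex (0,0) and the eigenvalue c - rc/N at the all-cooperator vertex (1,0)
are strictly positive, so those vertices are unstable. -/
theorem stmt19 (N r c G B b h p q α β μ : ℝ)
    (hr : 1 < r) (hrN : r < N) (hc : 0 < c) (hG : 0 < G) (hB : 0 < B) (hb : 0 < b)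
    (hh : 0 ≤ h) (hp0 : 0 < p) (hp1 : p ≤ 1) (hq0 : 0 < q) (hq1 : q ≤ 1)
    (hβ : β = (c - r*c/N) / ((1-p*q)*B*(N-1) + p*q*h*(N-1)))
    (hμ : μ = G / (p*q*(N-1)*b))
    (hα : α = (r*c/N - c - G + p*q*(N-1)*b) / ((B + b - h)*(N-1)*p*q - B*(N-1)))
    (hnoint : 1 ≤ β ∨ 1 ≤ μ ∨ 1 ≤ β + μ)
    (hnoedge : α ∉ Set.Ioo (0:ℝ) 1)
    (hD : r*c/N - c - G + p*q*(N-1)*b < 0) :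
    Jxx N r c G B b h p q 0 1 = r*c/N - c ∧
    Jyy N r c G B b h p q 0 1 = r*c/N - c - G + p*q*(N-1)*b ∧
    Jxx N r c G B b h p q 0 1 < 0 ∧ Jyy N r c G B b h p q 0 1 < 0 ∧
    IsAsympStableEq (Fsys N r c G B b h p q) (0, 1) ∧
    Jxx N r c G B b h p q 0 0 = G ∧ 0 < G ∧
    ¬ IsStableEq (Fsys N r c G B b h p q) (0, 0) ∧
    Jyy N r c G B b h p q 1 0 = c - r*c/N ∧ 0 < c - r*c/N ∧
    ¬ IsStableEq (Fsys N r c G B b h p q) (1, 0) := by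
  have hN : 0 < N := by linarith
  have hl1 : r*c/N - c < 0 := by
    rw [div_sub' (ne_of_gt hN), div_neg_iff]
    right
    constructor
    · nlinarith
    · exact hN
  have hl1' : 0 < c - r*c/N := by linarith
  refine ⟨JxxD N r c G B b h p q, JyyD N r c G B b h p q, ?_, ?_, ?_, JxxP N r c G B b h p q,
    hG, unstableP N r c G B b h p q hG, JyyC N r c G B b h p q, hl1', unstableC N r c G B b h p q hl1'⟩
  · rw [JxxD]; exact hl1
  · rw [JyyD]; exact hD
  · exact stableD N r c G B b h p q hl1 hD
end
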